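/- arXiv:1609.04654 — 2 statements merged into one kernel-verified Lean document; each statement's English description precedes it below -/
import Mathlib

section
/- Let G be a finite group and H ≤ G. If Y is a G-set all of whose orbits are isomorphic to G/H, then the fixed point set Y^H is nonempty on each orbit, and the natural map G/H ×_{WH} Y^H → Y sending [gH, y] to g·y is a G-equivariant bijection. Here WH = N_G(H)/H acts on Y^H by restriction of the G-action and G/H ×_{WH} Y^H is the quotient of G/H × Y^H by the relation (gnH, y) ∼ (gH, n·y) for n ∈ N_G(H). -/
/-- The equivalence relation on `G × X^H` defining the twisted product
`G/H ×_{WH} X^H`: `(gn, x) ∼ (g, n•x)` for `n ∈ N_G(H)` (this in particular quotients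
the first factor by `H`, since `H ⊆ N_G(H)` acts trivially on `X^H`). -/
def twistedSetoid (G : Type*) [Group G] (H : Subgroup G) (X : Type*) [MulAction G X] :
    Setoid (G × {x : X // ∀ h ∈ H, h • x = x}) where
  r p q := ∃ n ∈ (Subgroup.normalizer (H : Set G)), p.1 = q.1 * n ∧ (q.2 : X) = n • (p.2 : X)
  iseqv := by
    constructor
    · intro p; exact ⟨1, (Subgroup.normalizer (H : Set G)).one_mem, by simp, by simp⟩
    · rintro p q ⟨n, hn, h1, h2⟩
      exact ⟨n⁻¹, (Subgroup.normalizer (H : Set G)).inv_mem hn, by rw [h1]; group, by rw [h2]; simp⟩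
    · rintro p q s ⟨n, hn, h1, h2⟩ ⟨m, hm, h3, h4⟩
      exact ⟨m * n, (Subgroup.normalizer (H : Set G)).mul_mem hm hn, by rw [h1, h3]; group,
        by rw [h4, h2, mul_smul]⟩

/-- If every orbit of the `G`-set `Y` is `G`-equivariantly isomorphic to `G/H`,
then every orbit meets the fixed point set `Y^H`, and the natural map
`G/H ×_{WH} Y^H → Y`, `[gH, y] ↦ g • y`, is a `G`-equivariant bijection. -/
theorem tom_dieck_orbit_decomposition
    (G : Type*) [Group G] [Fintype G] (H : Subgroup G) (Y : Type*) [MulAction G Y]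
    (horb : ∀ y : Y, ∃ f : G ⧸ H → MulAction.orbit G y,
      Function.Bijective f ∧
      ∀ (g : G) (q : G ⧸ H), (f (g • q) : Y) = g • (f q : Y)) :
    (∀ y : Y, ∃ z ∈ MulAction.orbit G y, ∀ h ∈ H, h • z = z) ∧
    ∃ lam : Quotient (twistedSetoid G H Y) → Y,
      (∀ (g : G) (y : {y : Y // ∀ h ∈ H, h • y = y}),
        lam (Quotient.mk (twistedSetoid G H Y) (g, y)) = g • (y : Y)) ∧
      Function.Bijective lam ∧
      (∀ (g' g : G) (y : {y : Y // ∀ h ∈ H, h • y = y}),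
        lam (Quotient.mk (twistedSetoid G H Y) (g' * g, y))
          = g' • lam (Quotient.mk (twistedSetoid G H Y) (g, y))) := by
  classical
  -- stabilizer of an H-fixed point is exactly H
  have key : ∀ y : Y, (∀ h ∈ H, h • y = y) → MulAction.stabilizer G y = H := by
    intro y hy
    have hle : H ≤ MulAction.stabilizer G y := fun h hh => hy h hh
    refine (Subgroup.eq_of_le_of_card_ge hle ?_).symm
    obtain ⟨f, hf, _⟩ := horb y
    have h1 : Nat.card (G ⧸ H) = Nat.card (MulAction.orbit G y) :=
      Nat.card_eq_of_bijective f hf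
    have h2 : Nat.card (MulAction.orbit G y) = Nat.card (G ⧸ MulAction.stabilizer G y) :=
      Nat.card_congr (MulAction.orbitEquivQuotientStabilizer G y)
    have h3 := Subgroup.card_eq_card_quotient_mul_card_subgroup H
    have h4 := Subgroup.card_eq_card_quotient_mul_card_subgroup (MulAction.stabilizer G y)
    have hq : 0 < Nat.card (G ⧸ H) := Nat.card_pos
    have : Nat.card (G ⧸ H) * Nat.card H
        = Nat.card (G ⧸ H) * Nat.card (MulAction.stabilizer G y) := by
      rw [← h3, h4, h1, h2]
    exact le_of_eq (Nat.eq_of_mul_eq_mul_left hq this).symm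
  -- each orbit contains an H-fixed point
  have fixedpt : ∀ y : Y, ∃ z ∈ MulAction.orbit G y, ∀ h ∈ H, h • z = z := by
    intro y
    obtain ⟨f, hf, heq⟩ := horb y
    refine ⟨(f ((1:G) : G ⧸ H) : Y), (f ((1:G) : G ⧸ H)).2, fun h hh => ?_⟩
    have h1 : h • ((1:G) : G ⧸ H) = ((1:G) : G ⧸ H) := by
      rw [MulAction.Quotient.smul_mk, smul_eq_mul, mul_one]
      exact QuotientGroup.eq.mpr (by simpa using H.inv_mem hh)
    rw [← heq h ((1:G) : G ⧸ H), h1]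
  refine ⟨fixedpt, ?_⟩
  -- the well-defined map
  have hwd : ∀ (p q : G × {x : Y // ∀ h ∈ H, h • x = x}),
      (twistedSetoid G H Y).r p q → p.1 • (p.2 : Y) = q.1 • (q.2 : Y) := by
    rintro p q ⟨n, hn, h1, h2⟩
    rw [h1, h2, mul_smul]
  refine ⟨Quotient.lift (fun p => p.1 • (p.2 : Y)) hwd, fun g y => rfl, ⟨?_, ?_⟩,
    fun g' g y => by simp [mul_smul]⟩
  · -- injective
    refine Quotient.ind fun p => Quotient.ind fun q hpq => ?_
    obtain ⟨g, y⟩ := p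
    obtain ⟨g', y'⟩ := q
    have hval : g • (y : Y) = g' • (y' : Y) := hpq
    refine Quotient.sound ⟨g'⁻¹ * g, ?_, by group, ?_⟩
    · -- normalizer membership
      have hyv : (y' : Y) = (g'⁻¹ * g) • (y : Y) := by
        rw [mul_smul, hval, ← mul_smul, inv_mul_cancel, one_smul]
      have hH : ∀ h ∈ H, (g'⁻¹ * g)⁻¹ * h * (g'⁻¹ * g) ∈ H := by
        intro h hh
        have : ((g'⁻¹ * g)⁻¹ * h * (g'⁻¹ * g)) • (y : Y) = (y : Y) := by
          rw [mul_smul, mul_smul, ← hyv, y'.2 h hh, hyv, ← mul_smul, inv_mul_cancel, one_smul]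
        have hst : (g'⁻¹ * g)⁻¹ * h * (g'⁻¹ * g) ∈ MulAction.stabilizer G (y : Y) := this
        rwa [key (y : Y) y.2] at hst
      have := Subgroup.mem_normalizer_fintype (S := (H : Set G)) (x := (g'⁻¹ * g)⁻¹)
        (fun n hn => by simpa [mul_assoc] using hH n hn)
      simpa using (Subgroup.normalizer (H : Set G)).inv_mem this
    · show (y' : Y) = (g'⁻¹ * g) • (y : Y)
      rw [mul_smul, hval, ← mul_smul, inv_mul_cancel, one_smul]
  · -- surjective
    intro y0
    obtain ⟨f, hf, heq⟩ := horb y0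
    set z : Y := (f ((1:G) : G ⧸ H) : Y) with hz
    have hzfix : ∀ h ∈ H, h • z = z := by
      intro h hh
      have h1 : h • ((1:G) : G ⧸ H) = ((1:G) : G ⧸ H) := by
        rw [MulAction.Quotient.smul_mk, smul_eq_mul, mul_one]
        exact QuotientGroup.eq.mpr (by simpa using H.inv_mem hh)
      rw [hz, ← heq h ((1:G) : G ⧸ H), h1]
    obtain ⟨q, hq⟩ := hf.2 ⟨y0, MulAction.mem_orbit_self y0⟩
    obtain ⟨g, rfl⟩ := QuotientGroup.mk_surjective q
    refine ⟨Quotient.mk _ (g, ⟨z, hzfix⟩), ?_⟩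
    show g • z = y0
    have h1 : (g : G ⧸ H) = g • ((1:G) : G ⧸ H) := by
      rw [MulAction.Quotient.smul_mk, smul_eq_mul, mul_one]
    have h2 := heq g ((1:G) : G ⧸ H)
    rw [← h1, hq] at h2
    exact h2.symm
end

section
/- Let G be a finite group, H ≤ G, and X a G-set all of whose points have stabilizer conjugate to H. Then the WH-action on X^H is free, where WH = N_G(H)/H. -/
/-- If every point of the `G`-set `X` has stabilizer conjugate to `H`, then the
action of `WH = N_G(H)/H` on the `H`-fixed points `X^H` (given by the action of the
normalizer) is free: if `n ∈ N_G(H)` fixes a point of `X^H` then `n ∈ H`. -/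
theorem weyl_action_on_fixed_points_free
    (G : Type*) [Group G] [Fintype G] (H : Subgroup G) (X : Type*) [MulAction G X]
    (hconj : ∀ x : X, ∃ g : G,
      MulAction.stabilizer G x = Subgroup.map (MulAut.conj g).toMonoidHom H) :
    ∀ n : G, n ∈ Subgroup.normalizer (H : Set G) → ∀ x : X, (∀ h ∈ H, h • x = x) → n • x = x → n ∈ H := by
  intro n _ x hfix hnx
  obtain ⟨g, hg⟩ := hconj x
  have hHle : H ≤ MulAction.stabilizer G x := fun h hh => hfix h hh
  have hcard : Nat.card (MulAction.stabilizer G x) ≤ Nat.card H := by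
    rw [hg]
    exact le_of_eq (Nat.card_congr
      (Subgroup.equivMapOfInjective H _ (MulAut.conj g).injective).symm.toEquiv)
  have : H = MulAction.stabilizer G x := Subgroup.eq_of_le_of_card_ge hHle hcard
  rw [this]
  exact hnx
end
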